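/- Let t ∈ (0,1) and let w ∈ ℂ satisfy Re w = Real.log t and Im w ≥ 0. Then H_t(w) ≥ |Real.log t|/2. (This is the statement that H_t(z) ≥ |log t|/2 on the circle |z| = t.) -/

import Mathlib

noncomputable section

open Complex

/-- The barrier function `H_t(w) = Im((log t)·w / ((log t) + I·w))`. -/
def Ht (t : ℝ) (w : ℂ) : ℝ :=
  (((Real.log t : ℂ) * w) / ((Real.log t : ℂ) + Complex.I * w)).im

/-- On the circle `|z| = t` (i.e. `Re w = log t`, `Im w ≥ 0`), the barrier satisfies
`H_t(w) ≥ |log t|/2`. -/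
theorem Ht_ge_on_inner_circle (t : ℝ) (ht : t ∈ Set.Ioo (0 : ℝ) 1) (w : ℂ)
    (hre : w.re = Real.log t) (him : 0 ≤ w.im) :
    |Real.log t| / 2 ≤ Ht t w := by
  obtain ⟨ht0, ht1⟩ := ht
  set L := Real.log t with hLdef
  have hL : L < 0 := Real.log_neg ht0 ht1
  set y := w.im with hy
  have habs : |L| = -L := abs_of_neg hL
  have hden : 0 < (L - y) ^ 2 + L ^ 2 := by nlinarith [sq_nonneg (L - y), sq_nonneg L, mul_pos (neg_pos.mpr hL) (neg_pos.mpr hL)]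
  have hHt : Ht t w = (L ^ 2 * y - L * y ^ 2 - L ^ 3) / ((L - y) ^ 2 + L ^ 2) := by
    simp only [Ht, Complex.div_im, Complex.mul_im, Complex.mul_re, Complex.add_re,
      Complex.add_im, Complex.ofReal_re, Complex.ofReal_im, Complex.I_re, Complex.I_im,
      Complex.normSq_apply, hre]
    rw [← hLdef, ← hy]
    ring_nf
  rw [hHt, habs, div_le_div_iff₀ (by norm_num) hden]
  nlinarith [mul_nonneg (neg_nonneg.mpr hL.le) (sq_nonneg y), sq_nonneg (L - y)]
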